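/- Let A be an m×m invertible real symmetric matrix, B an n×n invertible real symmetric matrix. Then for every real m×n matrix X, the rank of [[A, X],[Xᵀ, B]] is at least max(m, n) + esd(A, B), where esd(A,B) is the eigenvalue sign disagreement: esd(A,B) = 0 if (p_A − p_B)(n_A − n_B) ≥ 0, and esd(A,B) = min(|p_A − p_B|, |n_A − n_B|) otherwise, with p_C and n_C the numbers of positive and negative eigenvalues of C. -/

import Mathlib

open Matrix

open Finset

lemma li_single {ι : Type*} [Fintype ι] [DecidableEq ι] (S : Finset ι) :
    LinearIndependent ℝ (fun i : S => (Pi.single (i : ι) (1:ℝ) : ι → ℝ)) := by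
  rw [Fintype.linearIndependent_iff]
  intro c hc j
  have h := congrFun hc (j : ι)
  simp only [Finset.sum_apply, Pi.smul_apply, Pi.single_apply, smul_eq_mul, mul_ite, mul_one,
    mul_zero, Pi.zero_apply] at h
  rwa [Finset.sum_eq_single j
    (fun b _ hb => if_neg (fun h' => hb (Subtype.ext h'.symm))) (by simp), if_pos rfl] at h

variable {ι : Type*} [Fintype ι] [DecidableEq ι] {M : Matrix ι ι ℝ} (hM : M.IsHermitian)

lemma star_U_mulVec_U (c : ι → ℝ) :
    star (hM.eigenvectorUnitary : Matrix ι ι ℝ) *ᵥ ((hM.eigenvectorUnitary : Matrix ι ι ℝ) *ᵥ c) = c := by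
  rw [mulVec_mulVec, Unitary.coe_star_mul_self, one_mulVec]

lemma U_mulVec_injective : Function.Injective
    (fun c => (hM.eigenvectorUnitary : Matrix ι ι ℝ) *ᵥ c) := by
  intro a b h
  have := congrArg (fun v => star (hM.eigenvectorUnitary : Matrix ι ι ℝ) *ᵥ v) h
  simpa [star_U_mulVec_U hM] using this

lemma quadform_eq (x : ι → ℝ) :
    x ⬝ᵥ (M *ᵥ x) = ∑ i, hM.eigenvalues i *
      ((star (hM.eigenvectorUnitary : Matrix ι ι ℝ) *ᵥ x) i) ^ 2 := by
  set U : Matrix ι ι ℝ := (hM.eigenvectorUnitary : Matrix ι ι ℝ) with hU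
  set y := star U *ᵥ x with hy
  conv_lhs => rw [hM.spectral_theorem, Unitary.conjStarAlgAut_apply]
  have h1 : (U * diagonal (RCLike.ofReal ∘ hM.eigenvalues) * star U) *ᵥ x
      = U *ᵥ (diagonal (RCLike.ofReal ∘ hM.eigenvalues) *ᵥ y) := by
    rw [hy, mulVec_mulVec, mulVec_mulVec]
  rw [h1]
  have h2 : x ⬝ᵥ (U *ᵥ (diagonal (RCLike.ofReal ∘ hM.eigenvalues) *ᵥ y))
      = y ⬝ᵥ (diagonal (RCLike.ofReal ∘ hM.eigenvalues) *ᵥ y) := by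
    rw [dotProduct_mulVec, hy, Matrix.star_eq_conjTranspose,
      conjTranspose_eq_transpose_of_trivial, mulVec_transpose]
  rw [h2, dotProduct]
  refine Finset.sum_congr rfl fun i _ => ?_
  rw [mulVec_diagonal]
  simp [RCLike.ofReal]
  ring

lemma coord_exists (S : Finset ι) :
    ∃ V : Submodule ℝ (ι → ℝ), Module.finrank ℝ V = S.card ∧
      ∀ x ∈ V, x ≠ 0 → ∃ c : ι → ℝ, c ≠ 0 ∧ (∀ i ∉ S, c i = 0) ∧
        x ⬝ᵥ (M *ᵥ x) = ∑ i, hM.eigenvalues i * (c i) ^ 2 := by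
  classical
  set U : Matrix ι ι ℝ := (hM.eigenvectorUnitary : Matrix ι ι ℝ) with hU
  set g : S → (ι → ℝ) := fun i => U *ᵥ Pi.single (i : ι) 1 with hg
  have hgli : LinearIndependent ℝ g := by
    refine (li_single S).map' (Matrix.mulVecLin U) ?_
    rw [LinearMap.ker_eq_bot]
    intro a b hab
    exact U_mulVec_injective hM hab
  refine ⟨Submodule.span ℝ (Set.range g), ?_, ?_⟩
  · rw [finrank_span_eq_card hgli, Fintype.card_coe]
  · intro x hx hx0
    rw [Submodule.mem_span_range_iff_exists_fun] at hx
    obtain ⟨c, hc⟩ := hx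
    set c' : ι → ℝ := fun i => if h : i ∈ S then c ⟨i, h⟩ else 0 with hc'
    have hsum : (∑ i : S, c i • (Pi.single (i:ι) (1:ℝ) : ι → ℝ)) = c' := by
      ext j
      rw [Finset.sum_apply]
      by_cases hj : j ∈ S
      · rw [Finset.sum_eq_single ⟨j, hj⟩ (fun b _ hb => by
          have hbj : j ≠ (b : ι) := fun h => hb (Subtype.ext h.symm)
          simp [Pi.single_apply, hbj]) (by simp)]
        simp [hc', hj]
      · have h4 : ∀ b : S, c b • (Pi.single (b : ι) (1:ℝ) : ι → ℝ) j = 0 := by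
          intro b
          have : j ≠ (b : ι) := fun h => hj (h ▸ b.2)
          simp [Pi.single_apply, this]
        simp only [Pi.smul_apply, smul_eq_mul] at h4 ⊢
        rw [Finset.sum_congr rfl (fun b _ => h4 b), Finset.sum_const_zero]
        simp [hc', hj]
    have hxc : x = U *ᵥ c' := by
      rw [← hc, ← hsum]
      have h5 : (Matrix.mulVecLin U) (∑ i : S, c i • (Pi.single (i:ι) (1:ℝ) : ι → ℝ))
          = ∑ i : S, c i • g i := by
        rw [map_sum]
        exact Finset.sum_congr rfl fun i _ => by rw [_root_.map_smul]; rfl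
      exact h5.symm
    refine ⟨c', fun h => hx0 (by rw [hxc, h, mulVec_zero]), fun i hi => by simp [hc', hi], ?_⟩
    rw [quadform_eq hM x, hxc, star_U_mulVec_U hM c']

lemma coord_le (S : Finset ι) (V : Submodule ℝ (ι → ℝ)) (h : S.card < Module.finrank ℝ V) :
    ∃ x ∈ V, x ≠ 0 ∧ ∃ c : ι → ℝ, (∀ i ∈ S, c i = 0) ∧
      x ⬝ᵥ (M *ᵥ x) = ∑ i, hM.eigenvalues i * (c i) ^ 2 := by
  classical
  set U : Matrix ι ι ℝ := (hM.eigenvectorUnitary : Matrix ι ι ℝ) with hU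
  set f : V →ₗ[ℝ] (S → ℝ) :=
    { toFun := fun x => fun i => (star U *ᵥ (x : ι → ℝ)) (i : ι)
      map_add' := by intro a b; ext i; simp [mulVec_add]
      map_smul' := by intro r a; ext i; simp [mulVec_smul] } with hf
  have hnotinj : ¬ Function.Injective f := by
    intro hinj
    have := LinearMap.finrank_le_finrank_of_injective hinj
    rw [Module.finrank_pi, Fintype.card_coe] at this
    omega
  rw [Function.not_injective_iff] at hnotinj
  obtain ⟨a, b, hab, hne⟩ := hnotinj
  set z := a - b with hz
  have hz0 : (z : ι → ℝ) ≠ 0 := by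
    intro h0
    exact hne (Subtype.ext (sub_eq_zero.mp h0))
  refine ⟨z, z.2, hz0, fun i => (star U *ᵥ (z : ι → ℝ)) i, ?_, quadform_eq hM _⟩
  intro i hi
  have hfz : f z = 0 := by rw [hz, map_sub, hab, sub_self]
  have := congrFun hfz ⟨i, hi⟩
  simpa [hf] using this

lemma le_card_pos (V : Submodule ℝ (ι → ℝ)) (hV : ∀ x ∈ V, x ≠ 0 → 0 < x ⬝ᵥ (M *ᵥ x)) :
    Module.finrank ℝ V ≤ (univ.filter fun i => 0 < hM.eigenvalues i).card := by
  by_contra h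
  push_neg at h
  obtain ⟨x, hxV, hx0, c, hcS, hq⟩ := coord_le hM _ V h
  have h1 := hV x hxV hx0
  rw [hq] at h1
  have h2 : ∑ i, hM.eigenvalues i * c i ^ 2 ≤ 0 := Finset.sum_nonpos fun i _ => by
    by_cases hp : 0 < hM.eigenvalues i
    · rw [hcS i (mem_filter.mpr ⟨mem_univ _, hp⟩)]; simp
    · push_neg at hp; nlinarith [sq_nonneg (c i)]
  linarith

lemma le_card_neg (V : Submodule ℝ (ι → ℝ)) (hV : ∀ x ∈ V, x ≠ 0 → x ⬝ᵥ (M *ᵥ x) < 0) :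
    Module.finrank ℝ V ≤ (univ.filter fun i => hM.eigenvalues i < 0).card := by
  by_contra h
  push_neg at h
  obtain ⟨x, hxV, hx0, c, hcS, hq⟩ := coord_le hM _ V h
  have h1 := hV x hxV hx0
  rw [hq] at h1
  have h2 : (0:ℝ) ≤ ∑ i, hM.eigenvalues i * c i ^ 2 := Finset.sum_nonneg fun i _ => by
    by_cases hp : hM.eigenvalues i < 0
    · rw [hcS i (mem_filter.mpr ⟨mem_univ _, hp⟩)]; simp
    · push_neg at hp; positivity
  linarith

lemma exists_pos_subspace :
    ∃ V : Submodule ℝ (ι → ℝ),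
      Module.finrank ℝ V = (univ.filter fun i => 0 < hM.eigenvalues i).card ∧
      ∀ x ∈ V, x ≠ 0 → 0 < x ⬝ᵥ (M *ᵥ x) := by
  obtain ⟨V, hdim, hV⟩ := coord_exists hM (univ.filter fun i => 0 < hM.eigenvalues i)
  refine ⟨V, hdim, fun x hx hx0 => ?_⟩
  obtain ⟨c, hc0, hcs, hq⟩ := hV x hx hx0
  rw [hq]
  obtain ⟨j, hj⟩ := Function.ne_iff.mp hc0
  have hjS : 0 < hM.eigenvalues j := by
    by_contra hjs
    exact hj (hcs j (by simp [hjs]))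
  refine Finset.sum_pos' (fun i _ => ?_) ⟨j, mem_univ j, mul_pos hjS (sq_pos_of_ne_zero hj)⟩
  by_cases hp : 0 < hM.eigenvalues i
  · positivity
  · push_neg at hp
    rw [hcs i (by simp [not_lt.mpr hp, hp.not_gt])]
    simp

lemma exists_neg_subspace :
    ∃ V : Submodule ℝ (ι → ℝ),
      Module.finrank ℝ V = (univ.filter fun i => hM.eigenvalues i < 0).card ∧
      ∀ x ∈ V, x ≠ 0 → x ⬝ᵥ (M *ᵥ x) < 0 := by
  obtain ⟨V, hdim, hV⟩ := coord_exists hM (univ.filter fun i => hM.eigenvalues i < 0)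
  refine ⟨V, hdim, fun x hx hx0 => ?_⟩
  obtain ⟨c, hc0, hcs, hq⟩ := hV x hx hx0
  rw [hq]
  obtain ⟨j, hj⟩ := Function.ne_iff.mp hc0
  have hjS : hM.eigenvalues j < 0 := by
    by_contra hjs
    exact hj (hcs j (by simp [hjs]))
  have hterm : hM.eigenvalues j * c j ^ 2 < 0 := by
    have : (0:ℝ) < c j ^ 2 := sq_pos_of_ne_zero hj
    nlinarith
  refine Finset.sum_neg' (fun i _ => ?_) ⟨j, mem_univ j, hterm⟩
  by_cases hp : hM.eigenvalues i < 0
  · have := sq_nonneg (c i); nlinarith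
  · push_neg at hp
    rw [hcs i (by simp [not_lt.mpr hp, hp.not_gt])]
    simp

lemma rank_ge_counts :
    (univ.filter fun i => 0 < hM.eigenvalues i).card
      + (univ.filter fun i => hM.eigenvalues i < 0).card ≤ M.rank := by
  rw [hM.rank_eq_card_non_zero_eigs, Fintype.card_subtype]
  have hdisj : Disjoint (univ.filter fun i => 0 < hM.eigenvalues i)
      (univ.filter fun i => hM.eigenvalues i < 0) := by
    rw [Finset.disjoint_left]
    intro i hi hi'
    simp only [mem_filter] at hi hi'
    exact absurd (hi.2.trans hi'.2) (lt_irrefl _)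
  rw [← Finset.card_union_of_disjoint hdisj]
  apply Finset.card_le_card
  intro i hi
  simp only [mem_union, mem_filter, mem_univ, true_and] at hi ⊢
  rcases hi with h | h
  · exact h.ne'
  · exact h.ne

lemma counts_sum {k : ℕ} {A : Matrix (Fin k) (Fin k) ℝ} (hA : A.IsHermitian) (hAu : IsUnit A) :
    (univ.filter fun i => 0 < hA.eigenvalues i).card
      + (univ.filter fun i => hA.eigenvalues i < 0).card = k := by
  have hdet : A.det ≠ 0 := (Matrix.isUnit_iff_isUnit_det A).mp hAu |>.ne_zero
  have hne : ∀ i, hA.eigenvalues i ≠ 0 := by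
    intro i hi
    apply hdet
    rw [hA.det_eq_prod_eigenvalues]
    rw [Finset.prod_eq_zero (mem_univ i)]
    simp [hi]
  have hdisj : Disjoint (univ.filter fun i => 0 < hA.eigenvalues i)
      (univ.filter fun i => hA.eigenvalues i < 0) := by
    rw [Finset.disjoint_left]
    intro i hi hi'
    simp only [mem_filter] at hi hi'
    exact absurd (hi.2.trans hi'.2) (lt_irrefl _)
  rw [← Finset.card_union_of_disjoint hdisj]
  have : ((univ.filter fun i => 0 < hA.eigenvalues i)
      ∪ (univ.filter fun i => hA.eigenvalues i < 0)) = univ := by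
    ext i
    simp only [mem_union, mem_filter, mem_univ, true_and, iff_true]
    exact (lt_or_gt_of_ne (hne i)).imp_left id |>.symm
  rw [this, Finset.card_univ, Fintype.card_fin]

/-- Number of positive eigenvalues (with multiplicity) of a real symmetric matrix. -/
noncomputable def posCount {n : ℕ} {A : Matrix (Fin n) (Fin n) ℝ}
    (hA : A.IsHermitian) : ℕ :=
  (Finset.univ.filter fun i => 0 < hA.eigenvalues i).card

/-- Number of negative eigenvalues (with multiplicity) of a real symmetric matrix. -/
noncomputable def negCount {n : ℕ} {A : Matrix (Fin n) (Fin n) ℝ}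
    (hA : A.IsHermitian) : ℕ :=
  (Finset.univ.filter fun i => hA.eigenvalues i < 0).card

/-- The eigenvalue sign disagreement `esd(A, B)`. -/
noncomputable def esd {m n : ℕ} {A : Matrix (Fin m) (Fin m) ℝ}
    {B : Matrix (Fin n) (Fin n) ℝ} (hA : A.IsHermitian) (hB : B.IsHermitian) : ℕ :=
  if 0 ≤ ((posCount hA : ℤ) - (posCount hB : ℤ)) * ((negCount hA : ℤ) - (negCount hB : ℤ))
  then 0
  else min ((posCount hA : ℤ) - (posCount hB : ℤ)).natAbs
    ((negCount hA : ℤ) - (negCount hB : ℤ)).natAbs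

/-- Every completion `[[A, X], [Xᵀ, B]]` of the pattern of two disjoint cliques
has rank at least `max m n + esd(A, B)`. -/
theorem rank_block_ge_max_add_esd (m n : ℕ)
    (A : Matrix (Fin m) (Fin m) ℝ) (B : Matrix (Fin n) (Fin n) ℝ)
    (hA : A.IsHermitian) (hB : B.IsHermitian)
    (hAu : IsUnit A) (hBu : IsUnit B) :
    ∀ X : Matrix (Fin m) (Fin n) ℝ,
      max m n + esd hA hB ≤ (Matrix.fromBlocks A X Xᵀ B).rank := by
  intro X
  set M : Matrix (Fin m ⊕ Fin n) (Fin m ⊕ Fin n) ℝ := fromBlocks A X Xᵀ B with hMdef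
  have hM : M.IsHermitian := by
    rw [hMdef, Matrix.IsHermitian, fromBlocks_conjTranspose, hA, hB,
      conjTranspose_eq_transpose_of_trivial Xᵀ, transpose_transpose,
      conjTranspose_eq_transpose_of_trivial X]
  -- embedding linear maps
  let f1 : (Fin m → ℝ) →ₗ[ℝ] (Fin m ⊕ Fin n → ℝ) :=
    { toFun := fun x => Sum.elim x 0
      map_add' := by intro a b; ext (i | i) <;> simp
      map_smul' := by intro r a; ext (i | i) <;> simp }
  let f2 : (Fin n → ℝ) →ₗ[ℝ] (Fin m ⊕ Fin n → ℝ) :=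
    { toFun := fun x => Sum.elim (0 : Fin m → ℝ) x
      map_add' := by intro a b; ext (i | i) <;> simp
      map_smul' := by intro r a; ext (i | i) <;> simp }
  have hf1 : Function.Injective f1 := by
    intro a b h; funext i; exact congrFun h (Sum.inl i)
  have hf2 : Function.Injective f2 := by
    intro a b h; funext i; exact congrFun h (Sum.inr i)
  have hq1 : ∀ x : Fin m → ℝ, (Sum.elim x 0) ⬝ᵥ (M *ᵥ Sum.elim x 0) = x ⬝ᵥ (A *ᵥ x) := by
    intro x
    rw [hMdef, fromBlocks_mulVec]
    simp only [Sum.elim_comp_inl, Sum.elim_comp_inr, mulVec_zero, add_zero]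
    rw [sumElim_dotProduct_sumElim, zero_dotProduct, add_zero]
  have hq2 : ∀ y : Fin n → ℝ, (Sum.elim (0 : Fin m → ℝ) y) ⬝ᵥ (M *ᵥ Sum.elim (0 : Fin m → ℝ) y) = y ⬝ᵥ (B *ᵥ y) := by
    intro y
    rw [hMdef, fromBlocks_mulVec]
    simp only [Sum.elim_comp_inl, Sum.elim_comp_inr, mulVec_zero, zero_add]
    rw [sumElim_dotProduct_sumElim, zero_dotProduct, zero_add]
  -- count comparisons
  have hpA : (univ.filter fun i => 0 < hA.eigenvalues i).card
      ≤ (univ.filter fun i => 0 < hM.eigenvalues i).card := by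
    obtain ⟨V, hVdim, hVpos⟩ := exists_pos_subspace hA
    have hrk : Module.finrank ℝ (V.map f1) = Module.finrank ℝ V :=
      ((Submodule.equivMapOfInjective f1 hf1 V).finrank_eq).symm
    rw [← hVdim, ← hrk]
    apply le_card_pos hM
    rintro x ⟨v, hv, rfl⟩ hx0
    have hv0 : v ≠ 0 := fun h => hx0 (by rw [h, map_zero])
    have : f1 v = Sum.elim v 0 := rfl
    rw [this, hq1 v]
    exact hVpos v hv hv0
  have hpB : (univ.filter fun i => 0 < hB.eigenvalues i).card
      ≤ (univ.filter fun i => 0 < hM.eigenvalues i).card := by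
    obtain ⟨V, hVdim, hVpos⟩ := exists_pos_subspace hB
    have hrk : Module.finrank ℝ (V.map f2) = Module.finrank ℝ V :=
      ((Submodule.equivMapOfInjective f2 hf2 V).finrank_eq).symm
    rw [← hVdim, ← hrk]
    apply le_card_pos hM
    rintro x ⟨v, hv, rfl⟩ hx0
    have hv0 : v ≠ 0 := fun h => hx0 (by rw [h, map_zero])
    have : f2 v = Sum.elim (0 : Fin m → ℝ) v := rfl
    rw [this, hq2 v]
    exact hVpos v hv hv0
  have hnA : (univ.filter fun i => hA.eigenvalues i < 0).card
      ≤ (univ.filter fun i => hM.eigenvalues i < 0).card := by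
    obtain ⟨V, hVdim, hVpos⟩ := exists_neg_subspace hA
    have hrk : Module.finrank ℝ (V.map f1) = Module.finrank ℝ V :=
      ((Submodule.equivMapOfInjective f1 hf1 V).finrank_eq).symm
    rw [← hVdim, ← hrk]
    apply le_card_neg hM
    rintro x ⟨v, hv, rfl⟩ hx0
    have hv0 : v ≠ 0 := fun h => hx0 (by rw [h, map_zero])
    have : f1 v = Sum.elim v 0 := rfl
    rw [this, hq1 v]
    exact hVpos v hv hv0
  have hnB : (univ.filter fun i => hB.eigenvalues i < 0).card
      ≤ (univ.filter fun i => hM.eigenvalues i < 0).card := by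
    obtain ⟨V, hVdim, hVpos⟩ := exists_neg_subspace hB
    have hrk : Module.finrank ℝ (V.map f2) = Module.finrank ℝ V :=
      ((Submodule.equivMapOfInjective f2 hf2 V).finrank_eq).symm
    rw [← hVdim, ← hrk]
    apply le_card_neg hM
    rintro x ⟨v, hv, rfl⟩ hx0
    have hv0 : v ≠ 0 := fun h => hx0 (by rw [h, map_zero])
    have : f2 v = Sum.elim (0 : Fin m → ℝ) v := rfl
    rw [this, hq2 v]
    exact hVpos v hv hv0
  have hrank := rank_ge_counts hM
  have hAm := counts_sum hA hAu
  have hBn := counts_sum hB hBu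
  simp only [esd]
  split_ifs with hcond <;> simp only [posCount, negCount] at hcond ⊢
  · omega
  · push_neg at hcond
    rcases mul_neg_iff.mp hcond with ⟨h1, h2⟩ | ⟨h1, h2⟩ <;> omega
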